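/- Let n ≥ 3, 0 < m < (n-2)/n. Suppose g : [0,ε) → ℝ is continuous with g(0) = η > 0, g is C¹ on (0,ε), and on (0,ε) it satisfies g'(r) = -(g(r)^{1-m}/(m r^{n-1})) ∫₀^r ρ^{n-3+(n-2-nm)/m} (α̃ g(ρ) + β̃ ρ g'(ρ)) dρ, where rg'(r) is bounded on (0,ε). If 0 < m < (n-2)/(n+1), then lim_{r→0⁺} g'(r) = 0; if (n-2)/(n+1) ≤ m < (n-2)/n, then lim_{r→0⁺} r^{δ₁} g'(r) = -α̃ η^{2-m}/(n-2-2m), where δ₁ = 1 - (n-2-nm)/m. -/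

import Mathlib

open Set Filter

theorem stmt_10 (n : ℕ) (hn : 3 ≤ n) (m α' β' η ε δ₁ : ℝ)
    (hm0 : 0 < m) (hm1 : m < ((n : ℝ) - 2) / n)
    (hα' : 0 < α') (hβ' : 0 < β') (hη : 0 < η) (hε : 0 < ε)
    (g : ℝ → ℝ)
    (hgc : ContinuousOn g (Ico 0 ε))
    (hg1 : ContDiffOn ℝ 1 g (Ioo 0 ε))
    (hgpos : ∀ r ∈ Ioo 0 ε, 0 < g r)
    (hg0 : g 0 = η)
    (hbd : ∃ C : ℝ, ∀ r ∈ Ioo 0 ε, |r * deriv g r| ≤ C)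
    (hlim0 : Tendsto (fun r => r * deriv g r) (nhdsWithin 0 (Ioi 0)) (nhds 0))
    (hint : ∀ r ∈ Ioo 0 ε,
      deriv g r = -(g r ^ (1 - m) / (m * r ^ ((n : ℝ) - 1))) *
        ∫ ρ in (0 : ℝ)..r,
          ρ ^ ((n : ℝ) - 3 + ((n : ℝ) - 2 - n * m) / m) * (α' * g ρ + β' * ρ * deriv g ρ))
    (hδ₁ : δ₁ = 1 - ((n : ℝ) - 2 - n * m) / m) :
    (m < ((n : ℝ) - 2) / (n + 1) →
        Tendsto (deriv g) (nhdsWithin 0 (Ioi 0)) (nhds 0)) ∧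
      (((n : ℝ) - 2) / (n + 1) ≤ m →
        Tendsto (fun r => r ^ δ₁ * deriv g r) (nhdsWithin 0 (Ioi 0))
          (nhds (-(α' * η ^ (2 - m) / ((n : ℝ) - 2 - 2 * m))))) := by
  have hn3 : (3 : ℝ) ≤ (n : ℝ) := by exact_mod_cast hn
  have hnpos : (0 : ℝ) < (n : ℝ) := by linarith
  set σ : ℝ := ((n : ℝ) - 2 - n * m) / m with hσdef
  have hσnum : 0 < (n : ℝ) - 2 - n * m := by
    have := (lt_div_iff₀ hnpos).mp hm1
    nlinarith
  have hσ : 0 < σ := div_pos hσnum hm0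
  set p : ℝ := (n : ℝ) - 3 + σ with hpdef
  have hp1 : 0 < p + 1 := by
    have : p + 1 = (n : ℝ) - 2 + σ := by rw [hpdef]; ring
    rw [this]; linarith
  have hpneg : (-1 : ℝ) < p := by linarith
  -- continuity of deriv g on Ioo 0 ε
  have hderivc : ContinuousOn (deriv g) (Ioo 0 ε) :=
    hg1.continuousOn_deriv_of_isOpen isOpen_Ioo le_rfl
  have hhc : ContinuousOn (fun ρ => α' * g ρ + β' * ρ * deriv g ρ) (Ioo 0 ε) := by
    apply ContinuousOn.add
    · exact continuousOn_const.mul (hgc.mono Ioo_subset_Ico_self)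
    · exact (continuousOn_const.mul continuousOn_id).mul hderivc
  -- limit of g at 0⁺
  have hg_lim : Tendsto g (nhdsWithin 0 (Ioi 0)) (nhds η) := by
    have h1 : Tendsto g (nhdsWithin 0 (Ioo 0 ε)) (nhds (g 0)) :=
      (hgc 0 ⟨le_rfl, hε⟩).mono Ioo_subset_Ico_self
    rw [hg0] at h1
    rwa [nhdsWithin_Ioo_eq_nhdsGT hε] at h1
  -- limit of h at 0⁺
  have hhl : Tendsto (fun ρ => α' * g ρ + β' * ρ * deriv g ρ) (nhdsWithin 0 (Ioi 0))
      (nhds (α' * η)) := by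
    have h2 : Tendsto (fun ρ => β' * (ρ * deriv g ρ)) (nhdsWithin 0 (Ioi 0))
        (nhds (β' * 0)) := hlim0.const_mul β'
    have h3 := (hg_lim.const_mul α').add h2
    simpa [mul_assoc] using h3
  -- bound on h near 0
  obtain ⟨C, hC⟩ := hbd
  have hC0 : 0 ≤ C := le_trans (abs_nonneg _) (hC (ε/2) ⟨half_pos hε, half_lt_self hε⟩)
  obtain ⟨M, hM⟩ := (isCompact_Icc : IsCompact (Icc (0:ℝ) (ε/2))).exists_bound_of_continuousOn
    (hgc.mono (fun x hx => ⟨hx.1, lt_of_le_of_lt hx.2 (half_lt_self hε)⟩))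
  have hM0 : 0 ≤ M := le_trans (norm_nonneg _) (hM 0 ⟨le_rfl, (half_pos hε).le⟩)
  set K : ℝ := α' * M + β' * C with hKdef
  have hK : ∀ ρ ∈ Ioc (0:ℝ) (ε/2), |α' * g ρ + β' * ρ * deriv g ρ| ≤ K := by
    intro ρ hρ
    have hρε : ρ ∈ Ioo 0 ε := ⟨hρ.1, lt_of_le_of_lt hρ.2 (half_lt_self hε)⟩
    have hgρ : |g ρ| ≤ M := hM ρ ⟨hρ.1.le, hρ.2⟩
    have hdρ : |ρ * deriv g ρ| ≤ C := hC ρ hρε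
    calc |α' * g ρ + β' * ρ * deriv g ρ| ≤ |α' * g ρ| + |β' * ρ * deriv g ρ| := abs_add_le _ _
      _ = α' * |g ρ| + β' * |ρ * deriv g ρ| := by
          rw [abs_mul, mul_assoc, abs_mul, abs_of_pos hα', abs_of_pos hβ']
      _ ≤ α' * M + β' * C := by
          have := mul_le_mul_of_nonneg_left hgρ hα'.le
          have := mul_le_mul_of_nonneg_left hdρ hβ'.le
          linarith
  -- integrability
  have hInt : ∀ r : ℝ, 0 < r → r ≤ ε/2 →
      IntervalIntegrable (fun ρ => ρ ^ p * (α' * g ρ + β' * ρ * deriv g ρ)) MeasureTheory.volume 0 r := by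
    intro r hr hr2
    rw [intervalIntegrable_iff_integrableOn_Ioc_of_le hr.le]
    have hsub : Ioc (0:ℝ) r ⊆ Ioo 0 ε :=
      fun x hx => ⟨hx.1, lt_of_le_of_lt (hx.2.trans hr2) (half_lt_self hε)⟩
    have hcont : ContinuousOn (fun ρ => ρ ^ p * (α' * g ρ + β' * ρ * deriv g ρ)) (Ioc 0 r) := by
      apply ContinuousOn.mul
      · intro x hx
        exact (Real.continuousAt_rpow_const x p (Or.inl hx.1.ne')).continuousWithinAt
      · exact hhc.mono hsub
    have hbnd : IntervalIntegrable (fun ρ => K * ρ ^ p) MeasureTheory.volume 0 r :=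
      (intervalIntegral.intervalIntegrable_rpow' hpneg).const_mul K
    rw [intervalIntegrable_iff_integrableOn_Ioc_of_le hr.le] at hbnd
    apply hbnd.mono' (hcont.aestronglyMeasurable measurableSet_Ioc)
    filter_upwards [MeasureTheory.ae_restrict_mem measurableSet_Ioc] with ρ hρ
    have hρp : (0:ℝ) ≤ ρ ^ p := Real.rpow_nonneg hρ.1.le p
    have hb := hK ρ ⟨hρ.1, hρ.2.trans hr2⟩
    calc ‖ρ ^ p * (α' * g ρ + β' * ρ * deriv g ρ)‖
        = ρ ^ p * |α' * g ρ + β' * ρ * deriv g ρ| := by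
          rw [norm_mul, Real.norm_eq_abs, Real.norm_eq_abs, abs_of_nonneg hρp]
      _ ≤ ρ ^ p * K := mul_le_mul_of_nonneg_left hb hρp
      _ = K * ρ ^ p := mul_comm _ _
  -- value of ∫₀^r ρ^p
  have hIval : ∀ r : ℝ, 0 ≤ r → (∫ ρ in (0:ℝ)..r, ρ ^ p) = r ^ (p+1) / (p+1) := by
    intro r _
    rw [integral_rpow (Or.inl hpneg), Real.zero_rpow hp1.ne', sub_zero]
  -- the key mean-value limit
  have key : Tendsto (fun r => (∫ ρ in (0:ℝ)..r, ρ ^ p * (α' * g ρ + β' * ρ * deriv g ρ)) / r ^ (p+1))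
      (nhdsWithin 0 (Ioi 0)) (nhds (α' * η / (p+1))) := by
    rw [Metric.tendsto_nhdsWithin_nhds]
    intro δ hδ
    obtain ⟨r₁, hr₁, hr₁'⟩ := Metric.tendsto_nhdsWithin_nhds.1 hhl (δ * (p+1) / 2)
      (by positivity)
    refine ⟨min r₁ (ε/2), by positivity, ?_⟩
    intro r hrIoi hrd
    have hr : 0 < r := hrIoi
    rw [Real.dist_eq, sub_zero, abs_of_pos hr] at hrd
    have hrr₁ : r < r₁ := lt_of_lt_of_le hrd (min_le_left _ _)
    have hrε : r ≤ ε/2 := (lt_of_lt_of_le hrd (min_le_right _ _)).le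
    have hIr := hInt r hr hrε
    have hIp : IntervalIntegrable (fun ρ => ρ ^ p * (α' * η)) MeasureTheory.volume 0 r :=
      (intervalIntegral.intervalIntegrable_rpow' hpneg).mul_const _
    have hrp : 0 < r ^ (p+1) := Real.rpow_pos_of_pos hr _
    have hdiff : (∫ ρ in (0:ℝ)..r, ρ ^ p * (α' * g ρ + β' * ρ * deriv g ρ))
        - (α' * η) * (r ^ (p+1) / (p+1))
        = ∫ ρ in (0:ℝ)..r, ρ ^ p * ((α' * g ρ + β' * ρ * deriv g ρ) - α' * η) := by
      have heq : (fun ρ => ρ ^ p * ((α' * g ρ + β' * ρ * deriv g ρ) - α' * η))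
          = fun ρ => ρ ^ p * (α' * g ρ + β' * ρ * deriv g ρ) - ρ ^ p * (α' * η) := by
        funext ρ; ring
      have h1 : (∫ ρ in (0:ℝ)..r, ρ ^ p * (α' * η)) = (r ^ (p+1)/(p+1)) * (α' * η) := by
        rw [intervalIntegral.integral_mul_const, hIval r hr.le]
      rw [heq, intervalIntegral.integral_sub hIr hIp, h1]; ring
    have hbound : |∫ ρ in (0:ℝ)..r, ρ ^ p * ((α' * g ρ + β' * ρ * deriv g ρ) - α' * η)|
        ≤ (r ^ (p+1)/(p+1)) * (δ * (p+1) / 2) := by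
      have haemem := MeasureTheory.ae_restrict_mem (μ := MeasureTheory.volume)
        (measurableSet_uIoc (a := (0:ℝ)) (b := r))
      have hibnd : IntervalIntegrable (fun ρ => ρ ^ p * (δ * (p+1) / 2)) MeasureTheory.volume 0 r :=
        (intervalIntegral.intervalIntegrable_rpow' hpneg).mul_const _
      have := intervalIntegral.norm_integral_le_abs_of_norm_le (μ := MeasureTheory.volume)
        (f := fun ρ => ρ ^ p * ((α' * g ρ + β' * ρ * deriv g ρ) - α' * η))
        (g := fun ρ => ρ ^ p * (δ * (p+1) / 2)) (a := 0) (b := r) ?_ hibnd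
      · have hval : (∫ ρ in (0:ℝ)..r, ρ ^ p * (δ * (p+1) / 2))
            = (r ^ (p+1)/(p+1)) * (δ * (p+1) / 2) := by
          rw [intervalIntegral.integral_mul_const, hIval r hr.le]
        rw [hval] at this
        calc |∫ ρ in (0:ℝ)..r, ρ ^ p * ((α' * g ρ + β' * ρ * deriv g ρ) - α' * η)|
            ≤ |(r ^ (p+1)/(p+1)) * (δ * (p+1) / 2)| := this
          _ = (r ^ (p+1)/(p+1)) * (δ * (p+1) / 2) := abs_of_nonneg (by positivity)
      · filter_upwards [haemem] with t ht
        rw [uIoc_of_le hr.le] at ht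
        have htp : (0:ℝ) ≤ t ^ p := Real.rpow_nonneg ht.1.le p
        have hdistt : dist t 0 < r₁ := by
          rw [Real.dist_eq, sub_zero, abs_of_pos ht.1]
          exact lt_of_le_of_lt ht.2 hrr₁
        have := (hr₁' ht.1 hdistt).le
        rw [Real.dist_eq] at this
        calc ‖t ^ p * ((α' * g t + β' * t * deriv g t) - α' * η)‖
            = t ^ p * |(α' * g t + β' * t * deriv g t) - α' * η| := by
              rw [norm_mul, Real.norm_eq_abs, Real.norm_eq_abs, abs_of_nonneg htp]
          _ ≤ t ^ p * (δ * (p+1) / 2) := mul_le_mul_of_nonneg_left this htp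
    rw [Real.dist_eq]
    have hrewrite : (∫ ρ in (0:ℝ)..r, ρ ^ p * (α' * g ρ + β' * ρ * deriv g ρ)) / r ^ (p+1)
        - α' * η / (p+1)
        = ((∫ ρ in (0:ℝ)..r, ρ ^ p * (α' * g ρ + β' * ρ * deriv g ρ))
            - (α' * η) * (r ^ (p+1) / (p+1))) / r ^ (p+1) := by
      field_simp
    rw [hrewrite, hdiff, abs_div, abs_of_pos hrp]
    have hstep : |∫ ρ in (0:ℝ)..r, ρ ^ p * ((α' * g ρ + β' * ρ * deriv g ρ) - α' * η)| / r ^ (p+1)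
        ≤ ((r ^ (p+1)/(p+1)) * (δ * (p+1) / 2)) / r ^ (p+1) :=
      by gcongr
    have heq2 : ((r ^ (p+1)/(p+1)) * (δ * (p+1) / 2)) / r ^ (p+1) = δ / 2 := by
      field_simp
    rw [heq2] at hstep
    linarith
  -- limit of the prefactor
  have hGlim : Tendsto (fun r => -(g r ^ (1-m) / m)) (nhdsWithin 0 (Ioi 0))
      (nhds (-(η ^ (1-m) / m))) := by
    have hc : ContinuousAt (fun x : ℝ => x ^ (1-m)) η :=
      Real.continuousAt_rpow_const η (1-m) (Or.inl hη.ne')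
    exact ((hc.tendsto.comp hg_lim).div_const m).neg
  -- the main limit
  have main : Tendsto (fun r => r ^ δ₁ * deriv g r) (nhdsWithin 0 (Ioi 0))
      (nhds (-(α' * η ^ (2 - m) / ((n : ℝ) - 2 - 2 * m)))) := by
    have hprod := hGlim.mul key
    have hconst : -(η ^ (1-m) / m) * (α' * η / (p+1)) = -(α' * η ^ (2 - m) / ((n : ℝ) - 2 - 2 * m)) := by
      have hmp : m * (p+1) = (n : ℝ) - 2 - 2 * m := by
        rw [hpdef, hσdef]; field_simp; ring
      have hη2 : η ^ ((2:ℝ)-m) = η ^ ((1:ℝ)-m) * η := by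
        rw [show (2:ℝ)-m = (1-m)+1 by ring, Real.rpow_add hη, Real.rpow_one]
      rw [hη2, ← hmp]
      field_simp
    rw [hconst] at hprod
    apply hprod.congr'
    filter_upwards [Ioo_mem_nhdsGT_of_mem (⟨le_rfl, hε⟩ : (0:ℝ) ∈ Ico 0 ε)] with r hr
    have hr0 : 0 < r := hr.1
    rw [hint r hr]
    have hrn : r ^ ((n:ℝ)-1) = r ^ δ₁ * r ^ (p+1) := by
      rw [← Real.rpow_add hr0]
      congr 1
      rw [hδ₁, hpdef]; ring
    rw [hrn]
    have h1 : r ^ (p+1) ≠ 0 := (Real.rpow_pos_of_pos hr0 _).ne'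
    have h2 : r ^ δ₁ ≠ 0 := (Real.rpow_pos_of_pos hr0 _).ne'
    field_simp
  constructor
  · intro hm2
    have hσ1 : 1 < σ := by
      have hn1 : (0:ℝ) < (n:ℝ) + 1 := by linarith
      have := (lt_div_iff₀ hn1).mp hm2
      rw [hσdef, lt_div_iff₀ hm0]
      nlinarith
    have hr1 : Tendsto (fun r : ℝ => r ^ (σ-1)) (nhdsWithin 0 (Ioi 0)) (nhds 0) := by
      have hc : ContinuousAt (fun x : ℝ => x ^ (σ-1)) 0 :=
        Real.continuousAt_rpow_const 0 (σ-1) (Or.inr (by linarith))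
      have := hc.tendsto.mono_left (nhdsWithin_le_nhds (s := Ioi (0:ℝ)))
      simpa [Real.zero_rpow (show σ-1 ≠ 0 by linarith)] using this
    have hprod := hr1.mul main
    rw [zero_mul] at hprod
    apply hprod.congr'
    filter_upwards [self_mem_nhdsWithin] with r hr
    have hr0 : (0:ℝ) < r := hr
    rw [← mul_assoc, ← Real.rpow_add hr0, show σ-1+δ₁ = 0 by rw [hδ₁]; ring,
      Real.rpow_zero, one_mul]
  · intro _
    exact main
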